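/- arXiv:1905.01066 — 6 statements merged into one kernel-verified Lean document; each statement's English description precedes it below -/
import Mathlib

section
/- Suppose additionally that ι : V → H is a compact operator with dense range. Let u : ℕ → V be a sequence with u⁰ ≠ 0 and uʲ ≠ 0 for all j, satisfying the inverse power iteration: for all j ≥ 1 and all v ∈ V, a_β(uʲ, v) = μ(u^{j−1}) · ( ι u^{j−1} / ‖ι u^{j−1}‖_H , ι v )_H. Then the sequence of Rayleigh quotients μ(uʲ) converges to some real μ⋆ > 0, and there exist u⋆ ∈ V and a strictly increasing map φ : ℕ → ℕ such that u^{φ(j)} → u⋆ in the norm of V, ‖ι u⋆‖_H = 1, and a(u⋆, v) = (μ⋆ − β)·(ι u⋆, ι v)_H for all v ∈ V; that is, (u⋆, μ⋆ − β) is an eigenpair of the problem a(u,v) = λ (ι u, ι v)_H. -/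
open scoped ComplexConjugate
open Filter

local notation "⟪" x ", " y "⟫" => @inner ℂ _ _ x y

set_option maxHeartbeats 1000000 in
/-- Theorem 3.1, convergence of the inverse power iteration:
`V`, `H` complex Hilbert spaces, `ι : V → H` injective, continuous, compact with dense range,
`a` a Hermitian continuous sesquilinear form satisfying the Gårding inequality with `α > 0`,
`β ≥ 0`.  The shifted form is `a_β(u,v) = a(u,v) + β (ι u, ι v)_H` and the Rayleigh quotient
`μ(u) = a_β(u,u)/‖ι u‖²`.  If `u : ℕ → V` is a sequence of nonzero vectors satisfying the
inverse power iteration `a_β(uʲ, v) = μ(u^{j-1}) (ι u^{j-1}/‖ι u^{j-1}‖, ι v)_H` for all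
`j ≥ 1`, `v ∈ V`, then `μ(uʲ)` converges to some `μ⋆ > 0` and a subsequence of `uʲ`
converges in `V` to some `u⋆` with `‖ι u⋆‖ = 1` and `a(u⋆,v) = (μ⋆-β)(ι u⋆, ι v)_H`
for all `v`. -/
theorem stmt_4 {V H : Type*}
    [NormedAddCommGroup V] [InnerProductSpace ℂ V] [CompleteSpace V]
    [NormedAddCommGroup H] [InnerProductSpace ℂ H] [CompleteSpace H]
    (ι : V →L[ℂ] H) (hι : Function.Injective ι)
    (hcomp : IsCompactOperator (ι : V → H)) (hdense : DenseRange (ι : V → H))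
    (a : V →ₗ⋆[ℂ] V →ₗ[ℂ] ℂ)
    (hHerm : ∀ u v : V, a u v = (starRingEnd ℂ) (a v u))
    (C : ℝ) (hcont : ∀ u v : V, ‖a u v‖ ≤ C * ‖u‖ * ‖v‖)
    (α β : ℝ) (hα : 0 < α) (hβ : 0 ≤ β)
    (hGarding : ∀ u : V, α * ‖u‖ ^ 2 - β * ‖ι u‖ ^ 2 ≤ (a u u).re)
    (u : ℕ → V) (hu : ∀ j, u j ≠ 0)
    (hiter : ∀ j : ℕ, ∀ v : V,
      a (u (j + 1)) v + (β : ℂ) * (inner ℂ (ι (u (j + 1))) (ι v) : ℂ) =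
        ((((a (u j) (u j)).re + β * ‖ι (u j)‖ ^ 2) / ‖ι (u j)‖ ^ 2 : ℝ) : ℂ) *
          (inner ℂ ((‖ι (u j)‖ : ℂ)⁻¹ • ι (u j)) (ι v) : ℂ)) :
    ∃ μstar : ℝ, 0 < μstar ∧
      Filter.Tendsto
        (fun j => ((a (u j) (u j)).re + β * ‖ι (u j)‖ ^ 2) / ‖ι (u j)‖ ^ 2)
        Filter.atTop (nhds μstar) ∧
      ∃ (ustar : V) (φ : ℕ → ℕ), StrictMono φ ∧
        Filter.Tendsto (fun j => u (φ j)) Filter.atTop (nhds ustar) ∧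
        ‖ι ustar‖ = 1 ∧
        ∀ v : V, a ustar v = ((μstar - β : ℝ) : ℂ) * (inner ℂ (ι ustar) (ι v) : ℂ) := by
  -- the shifted form
  set b : V → V → ℂ := fun x y => a x y + (β : ℂ) * ⟪ι x, ι y⟫ with hb_def
  set Q : V → ℝ := fun x => (b x x).re with hQ_def
  set n : ℕ → ℝ := fun j => ‖ι (u j)‖ with hn_def
  set m : ℕ → ℝ := fun j => ((a (u j) (u j)).re + β * ‖ι (u j)‖ ^ 2) / ‖ι (u j)‖ ^ 2
    with hm_def
  -- basic facts
  have hι0 : ∀ x : V, x ≠ 0 → ι x ≠ 0 := by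
    intro x hx h
    exact hx (hι (by simpa using h))
  have hn_pos : ∀ j, 0 < n j := fun j => norm_pos_iff.mpr (hι0 _ (hu j))
  -- b is Hermitian
  have hb_herm : ∀ x y : V, b x y = conj (b y x) := by
    intro x y
    simp only [hb_def, map_add, map_mul, Complex.conj_ofReal, inner_conj_symm, ← hHerm]
  -- linearity lemmas for b
  have hb_sub_left : ∀ x y z : V, b (x - y) z = b x z - b y z := by
    intro x y z
    simp only [hb_def, map_sub, LinearMap.sub_apply, inner_sub_left]
    ring
  have hb_sub_right : ∀ x y z : V, b x (y - z) = b x y - b x z := by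
    intro x y z
    simp only [hb_def, map_sub, inner_sub_right]
    ring
  have hb_smul_left : ∀ (c : ℂ) (x y : V), b (c • x) y = conj c * b x y := by
    intro c x y
    simp only [hb_def, map_smulₛₗ, LinearMap.smul_apply, map_smul, inner_smul_left,
      starRingEnd_apply, RingHom.id_apply, smul_eq_mul]
    ring
  have hb_smul_right : ∀ (c : ℂ) (x y : V), b x (c • y) = c * b x y := by
    intro c x y
    simp only [hb_def, map_smul, inner_smul_right, smul_eq_mul]
    ring
  -- Q in terms of a
  have hQa : ∀ x : V, Q x = (a x x).re + β * ‖ι x‖ ^ 2 := by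
    intro x
    have : Q x = (a x x).re + ((β : ℂ) * ⟪ι x, ι x⟫).re := by
      simp [hQ_def, hb_def]
    have h2 : (⟪ι x, ι x⟫).re = ‖ι x‖ ^ 2 := by
      rw [← RCLike.re_to_complex, inner_self_eq_norm_sq]
    rw [this, Complex.re_ofReal_mul, h2]
  -- Gårding for Q
  have hQcoer : ∀ x : V, α * ‖x‖ ^ 2 ≤ Q x := by
    intro x
    rw [hQa]
    have := hGarding x
    linarith
  have hQ0 : ∀ x : V, 0 ≤ Q x := fun x => le_trans (by positivity) (hQcoer x)
  -- expansion of Q on real combinations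
  have hexp : ∀ (s t : ℝ) (x y : V),
      Q ((s : ℂ) • x - (t : ℂ) • y)
        = s ^ 2 * Q x - 2 * s * t * (b x y).re + t ^ 2 * Q y := by
    intro s t x y
    have e : b ((s : ℂ) • x - (t : ℂ) • y) ((s : ℂ) • x - (t : ℂ) • y)
        = ((s * s : ℝ) : ℂ) * b x x
          - ((s * t : ℝ) : ℂ) * (b x y + b y x) + ((t * t : ℝ) : ℂ) * b y y := by
      simp only [hb_sub_left, hb_sub_right, hb_smul_left, hb_smul_right,
        Complex.conj_ofReal]
      push_cast
      ring
    have hre : (b y x).re = (b x y).re := by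
      rw [hb_herm y x, Complex.conj_re]
    simp only [hQ_def, e, Complex.add_re, Complex.sub_re, Complex.re_ofReal_mul, hre]
    ring
  -- Cauchy-Schwarz (real-part version) for b
  have hCS : ∀ x y : V, 0 < Q y → (b x y).re ^ 2 ≤ Q x * Q y := by
    intro x y hy
    have h := hexp (Q y) ((b x y).re) x y
    have h0 := hQ0 ((((Q y : ℝ)) : ℂ) • x - ((((b x y).re : ℝ)) : ℂ) • y)
    rw [h] at h0
    nlinarith [hQ0 x]
  -- the iteration in terms of b
  have hiter' : ∀ (j : ℕ) (v : V),
      b (u (j + 1)) v = ((m j / n j : ℝ) : ℂ) * ⟪ι (u j), ι v⟫ := by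
    intro j v
    have h := hiter j v
    rw [inner_smul_left, map_inv₀, Complex.conj_ofReal] at h
    calc b (u (j + 1)) v = a (u (j + 1)) v + (β : ℂ) * ⟪ι (u (j + 1)), ι v⟫ := rfl
      _ = ((m j : ℝ) : ℂ) * (((n j : ℝ) : ℂ)⁻¹ * ⟪ι (u j), ι v⟫) := h
      _ = ((m j / n j : ℝ) : ℂ) * ⟪ι (u j), ι v⟫ := by
          push_cast
          ring
  -- per-step identities
  have hQm : ∀ j, Q (u j) = m j * n j ^ 2 := by
    intro j
    have hnj := (hn_pos j).ne'
    rw [hQa, hm_def, hn_def]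
    field_simp
    exact (mul_div_cancel_left₀ _ hnj).symm
  have hm_pos : ∀ j, 0 < m j := by
    intro j
    have h2 : 0 < α * ‖u j‖ ^ 2 := by
      have := norm_pos_iff.mpr (hu j); positivity
    have h1 : 0 < Q (u j) := lt_of_lt_of_le h2 (hQcoer _)
    nlinarith [hQm j, hn_pos j, sq_nonneg (n j)]
  have hQpos : ∀ j, 0 < Q (u j) := by
    intro j
    rw [hQm j]
    exact mul_pos (hm_pos j) (pow_pos (hn_pos j) 2)
  have hre : ∀ (j : ℕ) (v : V), (b (u (j + 1)) v).re
      = (m j / n j) * (⟪ι (u j), ι v⟫).re := by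
    intro j v
    rw [hiter' j v, Complex.re_ofReal_mul]
  have hinner_self : ∀ j, (⟪ι (u j), ι (u j)⟫).re = n j ^ 2 := by
    intro j
    rw [← RCLike.re_to_complex, inner_self_eq_norm_sq]
  have h1 : ∀ j, Q (u (j + 1)) = (m j / n j) * (⟪ι (u j), ι (u (j + 1))⟫).re :=
    fun j => hre j (u (j + 1))
  have h2 : ∀ j, (b (u (j + 1)) (u j)).re = m j * n j := by
    intro j
    rw [hre j (u j), hinner_self j]
    field_simp [(hn_pos j).ne']
  have h4 : ∀ j, m j ≤ Q (u (j + 1)) := by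
    intro j
    have hcs := hCS (u (j + 1)) (u j) (hQpos j)
    rw [h2 j, hQm j] at hcs
    nlinarith [hcs, mul_pos (hm_pos j) (mul_pos (hn_pos j) (hn_pos j)), hm_pos j, hn_pos j]
  have hrle : ∀ j, (⟪ι (u j), ι (u (j + 1))⟫).re ≤ n j * n (j + 1) := by
    intro j
    have := re_inner_le_norm (𝕜 := ℂ) (ι (u j)) (ι (u (j + 1)))
    simpa [RCLike.re_to_complex] using this
  have h5 : ∀ j, Q (u (j + 1)) ≤ m j * n (j + 1) := by
    intro j
    have key : n j * Q (u (j + 1)) = m j * (⟪ι (u j), ι (u (j + 1))⟫).re := by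
      rw [h1 j]
      field_simp [(hn_pos j).ne']
    nlinarith [key, mul_le_mul_of_nonneg_left (hrle j) (le_of_lt (hm_pos j)), hn_pos j]
  have h6 : ∀ j, 1 ≤ n (j + 1) := by
    intro j
    nlinarith [h4 j, h5 j, hm_pos j]
  have h7 : ∀ j, m (j + 1) * n (j + 1) ≤ m j := by
    intro j
    have := h5 j
    rw [hQm (j + 1)] at this
    nlinarith [hn_pos (j + 1)]
  have h8 : ∀ j, m (j + 1) ≤ m j := by
    intro j
    nlinarith [h7 j, h6 j, hm_pos (j + 1)]
  have hanti : Antitone m := antitone_nat_of_succ_le h8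
  have hιnorm : 0 < ‖ι‖ := by
    refine norm_pos_iff.mpr ?_
    intro h
    exact hι0 (u 0) (hu 0) (by simp [h])
  have hnle : ∀ j, n j ≤ ‖ι‖ * ‖u j‖ := fun j => ι.le_opNorm (u j)
  have hmlb : ∀ j, α / ‖ι‖ ^ 2 ≤ m j := by
    intro j
    rw [div_le_iff₀ (by positivity)]
    have hg := hQcoer (u j)
    rw [hQm j] at hg
    have hsq : n j * n j ≤ (‖ι‖ * ‖u j‖) * (‖ι‖ * ‖u j‖) :=
      mul_le_mul (hnle j) (hnle j) (le_of_lt (hn_pos j)) (by positivity)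
    nlinarith [mul_le_mul_of_nonneg_left hsq hα.le,
      mul_le_mul_of_nonneg_left hg (sq_nonneg ‖ι‖), mul_pos (hn_pos j) (hn_pos j), hιnorm]
  set μ := ⨅ j, m j with hμ_def
  have hbdd : BddBelow (Set.range m) := ⟨α / ‖ι‖ ^ 2, by rintro x ⟨j, rfl⟩; exact hmlb j⟩
  have hmtend : Filter.Tendsto m atTop (nhds μ) := tendsto_atTop_ciInf hanti hbdd
  have hμlb : α / ‖ι‖ ^ 2 ≤ μ := le_ciInf hmlb
  have hμpos : 0 < μ := lt_of_lt_of_le (by positivity) hμlb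
  have hμne : μ ≠ 0 := ne_of_gt hμpos
  refine ⟨μ, hμpos, hmtend, ?_⟩
  -- boundedness of the sequence
  have hub : ∀ j, ‖u j‖ ≤ max ‖u 0‖ (m 0 * ‖ι‖ / α) := by
    intro j
    cases j with
    | zero => exact le_max_left _ _
    | succ j =>
      refine le_trans ?_ (le_max_right _ _)
      rw [le_div_iff₀ hα]
      have hg := hQcoer (u (j + 1))
      have h5' := h5 j
      have h3 : m j ≤ m 0 := hanti (Nat.zero_le j)
      have h4' := hnle (j + 1)
      have hmj := hm_pos j
      have hm0 : 0 < m 0 := hm_pos 0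
      nlinarith [norm_nonneg (u (j + 1)), hn_pos (j + 1), mul_pos hm0 hιnorm,
        mul_le_mul_of_nonneg_left h4' hm0.le,
        mul_le_mul_of_nonneg_right h3 (hn_pos (j + 1)).le]
  -- compactness: extract a convergent subsequence of the images
  obtain ⟨K, hKc, hKsub⟩ :=
    IsCompactOperator.image_closedBall_subset_compact (𝕜₁ := ℂ)
      (f := (ι : V →L[ℂ] H).toLinearMap) hcomp (max ‖u 0‖ (m 0 * ‖ι‖ / α))
  have hmem : ∀ j : ℕ, ι (u (j + 1)) ∈ K := by
    intro j
    exact hKsub ⟨u (j + 1), by simpa [Metric.mem_closedBall, dist_zero_right] using hub (j + 1), rfl⟩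
  obtain ⟨ω, -, φ₀, hφ₀, hωtend⟩ := hKc.tendsto_subseq hmem
  set φ : ℕ → ℕ := fun j => φ₀ j + 1 with hφ_def
  have hφ : StrictMono φ := fun i j h => Nat.add_lt_add_right (hφ₀ h) 1
  have hφtop : Filter.Tendsto φ atTop atTop := hφ.tendsto_atTop
  have hwφ : Filter.Tendsto (fun j => ι (u (φ j))) atTop (nhds ω) := hωtend
  -- convergence of the Rayleigh quotients along shifted indices
  have hmsucc : Filter.Tendsto (fun j => m (j + 1)) atTop (nhds μ) :=
    hmtend.comp (tendsto_add_atTop_nat 1)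
  have hratio : Filter.Tendsto (fun j => m j / m (j + 1)) atTop (nhds 1) := by
    have := hmtend.div hmsucc hμne
    rw [div_self hμne] at this
    exact this
  have hn1 : Filter.Tendsto (fun j => n (j + 1)) atTop (nhds 1) := by
    refine tendsto_of_tendsto_of_tendsto_of_le_of_le tendsto_const_nhds hratio h6 ?_
    intro j
    rw [le_div_iff₀ (hm_pos (j + 1))]
    have := h7 j
    nlinarith [this]
  have hQlim : Filter.Tendsto (fun j => Q (u (j + 1))) atTop (nhds μ) := by
    have ht : Filter.Tendsto (fun j => m (j + 1) * n (j + 1) ^ 2) atTop (nhds (μ * 1 ^ 2)) :=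
      hmsucc.mul (hn1.pow 2)
    simpa [hQm] using ht
  -- limit of norms along the subsequence
  have hnφ : Filter.Tendsto (fun j => n (φ j)) atTop (nhds 1) :=
    hn1.comp hφ₀.tendsto_atTop
  have hω1 : ‖ω‖ = 1 := tendsto_nhds_unique hwφ.norm hnφ
  -- the normalized iterates
  set w : ℕ → H := fun j => ((n j : ℝ) : ℂ)⁻¹ • ι (u j) with hw_def
  have hwphi : Filter.Tendsto (fun j => w (φ j)) atTop (nhds ω) := by
    have h1c : Filter.Tendsto (fun j => ((n (φ j) : ℝ) : ℂ)) atTop (nhds (1 : ℂ)) := by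
      have := (Complex.continuous_ofReal.tendsto 1).comp hnφ
      simpa [Function.comp_def] using this
    have hinv : Filter.Tendsto (fun j => ((n (φ j) : ℝ) : ℂ)⁻¹) atTop (nhds (1 : ℂ)) := by
      simpa using h1c.inv₀ one_ne_zero
    have := hinv.smul hwφ
    simpa using this
  -- consecutive iterates align
  have hreQ : ∀ j, (⟪w j, ι (u (j + 1))⟫).re = Q (u (j + 1)) / m j := by
    intro j
    have e1 : (⟪w j, ι (u (j + 1))⟫).re = (n j)⁻¹ * (⟪ι (u j), ι (u (j + 1))⟫).re := by
      rw [hw_def]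
      rw [inner_smul_left, map_inv₀, Complex.conj_ofReal, ← Complex.ofReal_inv,
        Complex.re_ofReal_mul]
    rw [e1, h1 j]
    field_simp [(hn_pos j).ne', (hm_pos j).ne']
  have hwnorm : ∀ j, ‖w j‖ = 1 := by
    intro j
    have hninv : ‖(((n j : ℝ)) : ℂ)⁻¹‖ = (n j)⁻¹ := by
      rw [norm_inv, Complex.norm_real, Real.norm_of_nonneg (hn_pos j).le]
    rw [hw_def]
    rw [norm_smul, hninv]
    exact inv_mul_cancel₀ (hn_pos j).ne'
  have hdist2 : Filter.Tendsto (fun j => ‖ι (u (j + 1)) - w j‖ ^ 2) atTop (nhds 0) := by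
    have heq : ∀ j, ‖ι (u (j + 1)) - w j‖ ^ 2
        = n (j + 1) ^ 2 - 2 * (Q (u (j + 1)) / m j) + 1 := by
      intro j
      have hns := norm_sub_sq (𝕜 := ℂ) (ι (u (j + 1))) (w j)
      have hre2 : RCLike.re ⟪ι (u (j + 1)), w j⟫ = (⟪w j, ι (u (j + 1))⟫).re := by
        rw [inner_re_symm, RCLike.re_to_complex]
      rw [hns, hre2, hreQ j, hwnorm j]
      norm_num
      rfl
    have ht : Filter.Tendsto (fun j => n (j + 1) ^ 2 - 2 * (Q (u (j + 1)) / m j) + 1)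
        atTop (nhds (1 ^ 2 - 2 * (μ / μ) + 1)) :=
      (((hn1.pow 2).sub (((hQlim.div hmtend hμne)).const_mul 2)).add tendsto_const_nhds)
    rw [show (0 : ℝ) = 1 ^ 2 - 2 * (μ / μ) + 1 by rw [div_self hμne]; norm_num]
    exact (tendsto_congr heq).mpr ht
  have hdist : Filter.Tendsto (fun j => ι (u (j + 1)) - w j) atTop (nhds 0) := by
    rw [tendsto_zero_iff_norm_tendsto_zero]
    have h := hdist2.sqrt
    have h' : (fun j => Real.sqrt (‖ι (u (j + 1)) - w j‖ ^ 2))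
        = fun j => ‖ι (u (j + 1)) - w j‖ :=
      funext fun j => Real.sqrt_sq (norm_nonneg _)
    rw [h'] at h
    simpa using h
  have hω2 : Filter.Tendsto (fun j => ι (u (φ j + 1))) atTop (nhds ω) := by
    have hd : Filter.Tendsto (fun j => ι (u (φ j + 1)) - w (φ j)) atTop (nhds 0) :=
      hdist.comp hφtop
    have := hwphi.add hd
    simpa using this
  -- the driving terms converge
  set c : ℕ → H := fun j => ((m (φ j) : ℝ) : ℂ) • w (φ j) with hc_def
  have hctend : Filter.Tendsto c atTop (nhds (((μ : ℝ) : ℂ) • ω)) :=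
    ((Complex.continuous_ofReal.tendsto μ).comp (hmtend.comp hφtop)).smul hwphi
  have hbc : ∀ (j : ℕ) (v : V), b (u (φ j + 1)) v = ⟪c j, ι v⟫ := by
    intro j v
    rw [hiter' (φ j) v, hc_def, hw_def]
    rw [inner_smul_left, inner_smul_left, map_inv₀, Complex.conj_ofReal, Complex.conj_ofReal]
    push_cast
    ring
  -- the iterates form a Cauchy sequence
  have hkey : ∀ j k : ℕ, ‖u (φ j + 1) - u (φ k + 1)‖ ≤ (‖ι‖ / α) * ‖c j - c k‖ := by
    intro j k
    set d := u (φ j + 1) - u (φ k + 1) with hd_def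
    have hbd : b d d = ⟪c j - c k, ι d⟫ := by
      rw [hd_def, hb_sub_left, hbc, hbc, inner_sub_left]
    have h1' : α * ‖d‖ ^ 2 ≤ (⟪c j - c k, ι d⟫).re := by
      rw [← hbd]
      exact hQcoer d
    have h2' : (⟪c j - c k, ι d⟫).re ≤ ‖c j - c k‖ * ‖ι d‖ := by
      have := re_inner_le_norm (𝕜 := ℂ) (c j - c k) (ι d)
      simpa only [RCLike.re_to_complex] using this
    have h3' : ‖ι d‖ ≤ ‖ι‖ * ‖d‖ := ι.le_opNorm d
    rcases eq_or_lt_of_le (norm_nonneg d) with h0 | h0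
    · rw [← h0]; positivity
    · rw [div_mul_eq_mul_div, le_div_iff₀ hα]
      nlinarith [mul_le_mul_of_nonneg_left h3' (norm_nonneg (c j - c k)), h0]
  have hcseq : CauchySeq (fun j => u (φ j + 1)) := by
    rw [Metric.cauchySeq_iff]
    intro ε hε
    have hδ : 0 < ε / (‖ι‖ / α + 1) := by positivity
    obtain ⟨N, hN⟩ := Metric.cauchySeq_iff.mp hctend.cauchySeq _ hδ
    refine ⟨N, fun j hj k hk => ?_⟩
    have h := hkey j k
    have hNk := hN j hj k hk
    rw [dist_eq_norm] at hNk ⊢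
    calc ‖u (φ j + 1) - u (φ k + 1)‖ ≤ (‖ι‖ / α) * ‖c j - c k‖ := h
      _ ≤ (‖ι‖ / α) * (ε / (‖ι‖ / α + 1)) :=
          mul_le_mul_of_nonneg_left hNk.le (by positivity)
      _ < (‖ι‖ / α + 1) * (ε / (‖ι‖ / α + 1)) :=
          mul_lt_mul_of_pos_right (lt_add_one _) hδ
      _ = ε := mul_div_cancel₀ ε (by positivity)
  obtain ⟨ustar, hust⟩ := cauchySeq_tendsto_of_complete hcseq
  have hιu : Filter.Tendsto (fun j => ι (u (φ j + 1))) atTop (nhds (ι ustar)) :=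
    (ι.continuous.tendsto ustar).comp hust
  have hωι : ι ustar = ω := tendsto_nhds_unique hιu hω2
  have hustar1 : ‖ι ustar‖ = 1 := by rw [hωι, hω1]
  -- continuity bound for b
  have hbnorm : ∀ x y : V, ‖b x y‖ ≤ (C + β * ‖ι‖ ^ 2) * ‖x‖ * ‖y‖ := by
    intro x y
    have h1' : ‖b x y‖ ≤ ‖a x y‖ + β * ‖⟪ι x, ι y⟫‖ := by
      calc ‖b x y‖ ≤ ‖a x y‖ + ‖(β : ℂ) * ⟪ι x, ι y⟫‖ := norm_add_le _ _
        _ = ‖a x y‖ + β * ‖⟪ι x, ι y⟫‖ := by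
            rw [norm_mul, Complex.norm_real, Real.norm_of_nonneg hβ]
    have h2' : ‖⟪ι x, ι y⟫‖ ≤ (‖ι‖ * ‖x‖) * (‖ι‖ * ‖y‖) := by
      calc ‖⟪ι x, ι y⟫‖ ≤ ‖ι x‖ * ‖ι y‖ := norm_inner_le_norm _ _
        _ ≤ (‖ι‖ * ‖x‖) * (‖ι‖ * ‖y‖) :=
            mul_le_mul (ι.le_opNorm x) (ι.le_opNorm y) (norm_nonneg _) (by positivity)
    have h3' := hcont x y
    nlinarith [mul_le_mul_of_nonneg_left h2' hβ]
  -- pass to the limit in the iteration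
  have heig : ∀ v : V, b ustar v = ((μ : ℝ) : ℂ) * ⟪ι ustar, ι v⟫ := by
    intro v
    have hnorm0 : Filter.Tendsto (fun j => ‖u (φ j + 1) - ustar‖) atTop (nhds 0) := by
      rw [← tendsto_zero_iff_norm_tendsto_zero]
      simpa using hust.sub (tendsto_const_nhds (x := ustar))
    have hL : Filter.Tendsto (fun j => b (u (φ j + 1)) v) atTop (nhds (b ustar v)) := by
      rw [← tendsto_sub_nhds_zero_iff]
      refine squeeze_zero_norm (a := fun j => (C + β * ‖ι‖ ^ 2) * ‖u (φ j + 1) - ustar‖ * ‖v‖) (fun j => ?_) ?_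
      · calc ‖b (u (φ j + 1)) v - b ustar v‖ = ‖b (u (φ j + 1) - ustar) v‖ := by
              rw [hb_sub_left]
          _ ≤ (C + β * ‖ι‖ ^ 2) * ‖u (φ j + 1) - ustar‖ * ‖v‖ := hbnorm _ _
      · have := (hnorm0.const_mul (C + β * ‖ι‖ ^ 2)).mul_const ‖v‖
        simpa using this
    have hR : Filter.Tendsto (fun j => b (u (φ j + 1)) v) atTop
        (nhds (⟪((μ : ℝ) : ℂ) • ω, ι v⟫)) := by
      have := Filter.Tendsto.inner (𝕜 := ℂ) (E := H) hctend (tendsto_const_nhds (x := ι v))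
      exact this.congr fun j => (hbc j v).symm
    have := tendsto_nhds_unique hL hR
    rw [this, inner_smul_left, Complex.conj_ofReal, hωι]
  refine ⟨ustar, fun j => φ j + 1, fun i j h => Nat.add_lt_add_right (hφ h) 1, hust,
    hustar1, ?_⟩
  intro v
  have h := heig v
  simp only [hb_def] at h
  push_cast
  linear_combination h
end

section
/- Let u, w ∈ V with u ≠ 0 and suppose w satisfies, for all v ∈ V, a_β(w, v) = μ(u) · ( ι u / ‖ι u‖_H , ι v )_H. Then w ≠ 0 and μ(w) ≤ μ(u); that is, one step of the inverse power iteration does not increase the Rayleigh quotient. -/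
set_option maxHeartbeats 1000000


/-- one step of the inverse power iteration does not increase the Rayleigh
quotient: with the setting of the Gårding framework, if `u ≠ 0` and `w` satisfies
`a_β(w, v) = μ(u) (ι u/‖ι u‖, ι v)_H` for all `v ∈ V`, then `w ≠ 0` and `μ(w) ≤ μ(u)`,
where `a_β(u,v) = a(u,v) + β (ι u, ι v)_H` and `μ(u) = a_β(u,u)/‖ι u‖²`. -/
theorem stmt_5 {V H : Type*}
    [NormedAddCommGroup V] [InnerProductSpace ℂ V] [CompleteSpace V]
    [NormedAddCommGroup H] [InnerProductSpace ℂ H] [CompleteSpace H]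
    (ι : V →L[ℂ] H) (hι : Function.Injective ι)
    (a : V →ₗ⋆[ℂ] V →ₗ[ℂ] ℂ)
    (hHerm : ∀ u v : V, a u v = (starRingEnd ℂ) (a v u))
    (C : ℝ) (hcont : ∀ u v : V, ‖a u v‖ ≤ C * ‖u‖ * ‖v‖)
    (α β : ℝ) (hα : 0 < α) (hβ : 0 ≤ β)
    (hGarding : ∀ u : V, α * ‖u‖ ^ 2 - β * ‖ι u‖ ^ 2 ≤ (a u u).re)
    (u w : V) (hu : u ≠ 0)
    (hstep : ∀ v : V,
      a w v + (β : ℂ) * (inner ℂ (ι w) (ι v) : ℂ) =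
        ((((a u u).re + β * ‖ι u‖ ^ 2) / ‖ι u‖ ^ 2 : ℝ) : ℂ) *
          (inner ℂ ((‖ι u‖ : ℂ)⁻¹ • ι u) (ι v) : ℂ)) :
    w ≠ 0 ∧
      ((a w w).re + β * ‖ι w‖ ^ 2) / ‖ι w‖ ^ 2 ≤
        ((a u u).re + β * ‖ι u‖ ^ 2) / ‖ι u‖ ^ 2 := by
  classical
  set N : ℝ := ‖ι u‖ with hN
  have hιu : ι u ≠ 0 := fun h => hu (hι (by simpa using h))
  have hNpos : 0 < N := by simpa [hN] using norm_pos_iff.2 hιu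
  have hNC : (N : ℂ) ≠ 0 := by exact_mod_cast hNpos.ne'
  set M : ℝ := (a u u).re + β * N ^ 2 with hM
  have hMpos : 0 < M := by
    have := hGarding u
    have h2 : 0 < α * ‖u‖ ^ 2 := mul_pos hα (pow_pos (norm_pos_iff.2 hu) 2)
    nlinarith
  set μ : ℝ := M / N ^ 2 with hμ
  have hμpos : 0 < μ := div_pos hMpos (pow_pos hNpos 2)
  set b : V → V → ℂ := fun x y => a x y + (β : ℂ) * (inner ℂ (ι x) (ι y) : ℂ) with hb
  have hre : ∀ x : V, (b x x).re = (a x x).re + β * ‖ι x‖ ^ 2 := by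
    intro x
    have : (inner ℂ (ι x) (ι x) : ℂ) = ((‖ι x‖ : ℂ)) ^ 2 := inner_self_eq_norm_sq_to_K (ι x)
    simp [hb, this, ← Complex.ofReal_pow, ← Complex.ofReal_mul]
  let c : PreInnerProductSpace.Core ℂ V :=
  { inner := b
    conj_inner_symm := by
      intro x y
      simp only [hb, map_add, map_mul, ← inner_conj_symm (ι x) (ι y), ← hHerm]
      simp
    re_inner_nonneg := by
      intro x
      show 0 ≤ (b x x).re
      rw [hre x]
      have := hGarding x
      nlinarith [sq_nonneg ‖x‖]
    add_left := by
      intro x y z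
      simp only [hb, map_add, LinearMap.add_apply, inner_add_left]
      ring
    smul_left := by
      intro x y r
      simp only [hb, LinearMap.map_smulₛₗ, LinearMap.smul_apply, inner_smul_left, smul_eq_mul,
        ContinuousLinearMap.map_smul]
      ring }
  have hCS : ‖b w u‖ * ‖b u w‖ ≤ (b w w).re * (b u u).re :=
    @InnerProductSpace.Core.inner_mul_inner_self_le ℂ V _ _ _ c w u
  have hμC : ∀ v : V, b w v = (μ : ℂ) * ((N : ℂ)⁻¹ * (inner ℂ (ι u) (ι v) : ℂ)) := by
    intro v
    have := hstep v
    rw [inner_smul_left] at this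
    simpa [hb, hμ, hM, hN, map_inv₀, Complex.conj_ofReal, mul_assoc] using this
  have hwu : b w u = ((μ * N : ℝ) : ℂ) := by
    have h := hμC u
    have h2 : (inner ℂ (ι u) (ι u) : ℂ) = ((N : ℂ)) ^ 2 := inner_self_eq_norm_sq_to_K (ι u)
    rw [h, h2, Complex.ofReal_mul]
    field_simp
  set s : ℝ := (inner ℂ (ι u) (ι w) : ℂ).re with hs
  have hww : (b w w).re = μ * (N⁻¹ * s) := by
    have h := hμC w
    rw [h, Complex.re_ofReal_mul, ← Complex.ofReal_inv, Complex.re_ofReal_mul, hs]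
  have huw : ‖b u w‖ = μ * N := by
    have h3 : b u w = (starRingEnd ℂ) (b w u) := (c.conj_inner_symm u w).symm
    rw [h3, hwu, Complex.conj_ofReal, Complex.norm_real, Real.norm_eq_abs]
    exact abs_of_nonneg (by positivity)
  have hwu' : ‖b w u‖ = μ * N := by
    rw [hwu]
    simp only [Complex.norm_real]
    exact abs_of_nonneg (by positivity)
  have hbuu : (b u u).re = M := by rw [hre u, hM, hN]
  -- from CS: μ² N² ≤ μ (N⁻¹ s) M, with M = μ N², so N ≤ s
  have hsN : N ≤ s := by
    rw [hwu', huw, hww, hbuu] at hCS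
    have hMe : M = μ * N ^ 2 := (div_mul_cancel₀ M (by positivity : (N : ℝ) ^ 2 ≠ 0)).symm
    rw [hMe] at hCS
    have e1 : μ * N * (μ * N) = μ ^ 2 * N * N := by ring
    have e2 : μ * (N⁻¹ * s) * (μ * N ^ 2) = μ ^ 2 * N * s := by
      field_simp
    have h4 : μ ^ 2 * N * N ≤ μ ^ 2 * N * s := by linarith [hCS, e1.le, e2.le]
    exact le_of_mul_le_mul_left h4 (by positivity)
  have hsK : s ≤ N * ‖ι w‖ := by
    have := re_inner_le_norm (𝕜 := ℂ) (ι u) (ι w)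
    simpa [hs, hN] using this
  set K : ℝ := ‖ι w‖ with hK
  have hK1 : 1 ≤ K := by
    by_contra hlt
    push_neg at hlt
    have : N * K < N := by nlinarith
    nlinarith
  have hKpos : 0 < K := lt_of_lt_of_le one_pos hK1
  have hw0 : w ≠ 0 := by
    intro h
    rw [h] at hK
    simp at hK
    rw [hK] at hKpos
    exact lt_irrefl 0 hKpos
  refine ⟨hw0, ?_⟩
  have hnum : (a w w).re + β * K ^ 2 = μ * (N⁻¹ * s) := by
    rw [← hww, hre w, hK]
  rw [hnum]
  rw [div_le_iff₀ (by positivity)]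
  -- μ * (N⁻¹ * s) ≤ μ * K²; N⁻¹ s ≤ K since s ≤ N K; and K ≤ K²
  have h1 : N⁻¹ * s ≤ K := by
    rw [inv_mul_le_iff₀ hNpos]
    linarith [hsK]
  have h2 : K ≤ K ^ 2 := by nlinarith
  calc μ * (N⁻¹ * s) ≤ μ * K := by nlinarith
    _ ≤ μ * K ^ 2 := by nlinarith
    _ = (M / N ^ 2) * K ^ 2 := by rw [hμ]
end

section
/- Let u, v : ℕ → V be sequences with u⁰ = v⁰, ‖ι u⁰‖_H = 1, and uʲ ≠ 0, vʲ ≠ 0 for all j, satisfying for all j ≥ 1 and all test functions w ∈ V the two iterations a_β(uʲ, w) = μ(u^{j−1}) · ( ι u^{j−1}/‖ι u^{j−1}‖_H , ι w )_H and a_β(vʲ, w) = ( ι v^{j−1}/‖ι v^{j−1}‖_H , ι w )_H. Then uʲ = μ(u^{j−1}) · vʲ for all j ≥ 1. -/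
/-- Lemma 3.4, relation between the two power iterations: with the Gårding
framework, let `u, v : ℕ → V` be sequences of nonzero vectors with `u⁰ = v⁰`,
`‖ι u⁰‖ = 1`, where `u` follows the Rayleigh-quotient inverse power iteration
`a_β(uʲ, w) = μ(u^{j-1}) (ι u^{j-1}/‖ι u^{j-1}‖, ι w)_H` and `v` follows the plain
iteration `a_β(vʲ, w) = (ι v^{j-1}/‖ι v^{j-1}‖, ι w)_H`.  Then `uʲ = μ(u^{j-1}) vʲ`
for all `j ≥ 1`, where `μ(z) = a_β(z,z)/‖ι z‖²`. -/
theorem stmt_6 {V H : Type*}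
    [NormedAddCommGroup V] [InnerProductSpace ℂ V] [CompleteSpace V]
    [NormedAddCommGroup H] [InnerProductSpace ℂ H] [CompleteSpace H]
    (ι : V →L[ℂ] H) (hι : Function.Injective ι)
    (a : V →ₗ⋆[ℂ] V →ₗ[ℂ] ℂ)
    (hHerm : ∀ u v : V, a u v = (starRingEnd ℂ) (a v u))
    (C : ℝ) (hcont : ∀ u v : V, ‖a u v‖ ≤ C * ‖u‖ * ‖v‖)
    (α β : ℝ) (hα : 0 < α) (hβ : 0 ≤ β)
    (hGarding : ∀ u : V, α * ‖u‖ ^ 2 - β * ‖ι u‖ ^ 2 ≤ (a u u).re)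
    (u v : ℕ → V) (h0 : u 0 = v 0) (hnorm0 : ‖ι (u 0)‖ = 1)
    (hu : ∀ j, u j ≠ 0) (hv : ∀ j, v j ≠ 0)
    (hiteru : ∀ j : ℕ, ∀ w : V,
      a (u (j + 1)) w + (β : ℂ) * (inner ℂ (ι (u (j + 1))) (ι w) : ℂ) =
        ((((a (u j) (u j)).re + β * ‖ι (u j)‖ ^ 2) / ‖ι (u j)‖ ^ 2 : ℝ) : ℂ) *
          (inner ℂ ((‖ι (u j)‖ : ℂ)⁻¹ • ι (u j)) (ι w) : ℂ))
    (hiterv : ∀ j : ℕ, ∀ w : V,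
      a (v (j + 1)) w + (β : ℂ) * (inner ℂ (ι (v (j + 1))) (ι w) : ℂ) =
        (inner ℂ ((‖ι (v j)‖ : ℂ)⁻¹ • ι (v j)) (ι w) : ℂ)) :
    ∀ j : ℕ,
      u (j + 1) =
        ((((a (u j) (u j)).re + β * ‖ι (u j)‖ ^ 2) / ‖ι (u j)‖ ^ 2 : ℝ) : ℂ) • v (j + 1) := by
  have hιne : ∀ z : V, z ≠ 0 → ‖ι z‖ ≠ 0 := by
    intro z hz
    simp only [ne_eq, norm_eq_zero]
    intro h
    exact hz (hι (by simpa using h))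
  -- uniqueness from coercivity
  have uniq : ∀ z : V,
      (∀ w : V, a z w + (β : ℂ) * (inner ℂ (ι z) (ι w) : ℂ) = 0) → z = 0 := by
    intro z hz
    by_contra hz0
    have h1 : (a z z).re + β * ‖ι z‖ ^ 2 = 0 := by
      have := congrArg Complex.re (hz z)
      simpa [inner_self_eq_norm_sq_to_K, ← Complex.ofReal_pow, Complex.ofReal_re] using this
    have h2 := hGarding z
    have h4 : 0 < ‖z‖ ^ 2 := pow_pos (norm_pos_iff.mpr hz0) 2
    nlinarith
  set μ : ℕ → ℝ := fun j => ((a (u j) (u j)).re + β * ‖ι (u j)‖ ^ 2) / ‖ι (u j)‖ ^ 2 with hμ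
  have hμpos : ∀ j, 0 < μ j := by
    intro j
    have h1 := hGarding (u j)
    have h2 : 0 < ‖u j‖ ^ 2 := pow_pos (norm_pos_iff.mpr (hu j)) 2
    have h3 : 0 < ‖ι (u j)‖ ^ 2 := by
      have := (hιne (u j) (hu j)); positivity
    have hnum : 0 < (a (u j) (u j)).re + β * ‖ι (u j)‖ ^ 2 := by nlinarith
    exact div_pos hnum h3
  intro j
  induction j with
  | zero =>
    apply sub_eq_zero.mp
    apply uniq
    intro w
    have hu1 := hiteru 0 w
    have hv1 := hiterv 0 w
    rw [← h0] at hv1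
    simp only [map_sub, LinearMap.sub_apply, map_smulₛₗ, LinearMap.smul_apply,
      inner_sub_left, inner_smul_left, Complex.conj_ofReal, smul_eq_mul, RingHom.id_apply]
    linear_combination hu1 -
      (((((a (u 0)) (u 0)).re + β * ‖ι (u 0)‖ ^ 2) / ‖ι (u 0)‖ ^ 2 : ℝ) : ℂ) * hv1
  | succ j ih =>
    have hιu : ι (u (j+1)) = ((μ j : ℝ) : ℂ) • ι (v (j+1)) := by
      rw [ih, map_smul]
    have hnormeq : ‖ι (u (j+1))‖ = μ j * ‖ι (v (j+1))‖ := by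
      rw [hιu, norm_smul, Complex.norm_real, Real.norm_eq_abs, abs_of_pos (hμpos j)]
    have hμ0 : ((μ j : ℝ) : ℂ) ≠ 0 := by
      exact_mod_cast (hμpos j).ne'
    have hv0 : ((‖ι (v (j+1))‖ : ℝ) : ℂ) ≠ 0 := by
      exact_mod_cast hιne (v (j+1)) (hv (j+1))
    have hnrm : (‖ι (u (j+1))‖ : ℂ)⁻¹ • ι (u (j+1)) =
        (‖ι (v (j+1))‖ : ℂ)⁻¹ • ι (v (j+1)) := by
      have h1 : ((‖ι (u (j+1))‖ : ℝ) : ℂ) = ((μ j : ℝ) : ℂ) * (‖ι (v (j+1))‖ : ℂ) := by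
        rw [hnormeq]; push_cast; ring
      rw [h1, hιu, smul_smul]
      congr 1
      field_simp
    apply sub_eq_zero.mp
    apply uniq
    intro w
    have hu1 := hiteru (j+1) w
    have hv1 := hiterv (j+1) w
    rw [hnrm] at hu1
    simp only [map_sub, LinearMap.sub_apply, map_smulₛₗ, LinearMap.smul_apply,
      inner_sub_left, inner_smul_left, Complex.conj_ofReal, smul_eq_mul, RingHom.id_apply]
    linear_combination hu1 -
      (((((a (u (j+1))) (u (j+1))).re + β * ‖ι (u (j+1))‖ ^ 2) / ‖ι (u (j+1))‖ ^ 2 : ℝ) : ℂ) * hv1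
end

section
/- Let V be a complex Hilbert space with topological dual V*, and let T : V → V* be a continuous linear map that is self-adjoint in the sense ⟨T v₁, v₂⟩ = conj(⟨T v₂, v₁⟩) for all v₁, v₂ ∈ V. Let u⋆ ∈ V, u⋆ ≠ 0, with ker(T) = span{u⋆}. Let w ∈ V* satisfy ⟨w, u⋆⟩ ≠ 0 and suppose { h ∈ V* : ⟨h, u⋆⟩ = 0 } ⊆ range(T). Let P : V → ℂ be a continuous linear functional with P(u⋆) ≠ 0. Then the block map (s, ν) ↦ (T s + ν·w, P(s)) from V × ℂ to V* × ℂ is bijective: for every f ∈ V* and g ∈ ℂ there exist unique s ∈ V and ν ∈ ℂ with T s + ν·w = f and P(s) = g. In particular ν = ⟨f, u⋆⟩ / ⟨w, u⋆⟩. -/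
set_option synthInstance.maxHeartbeats 400000
set_option maxHeartbeats 1000000


/-- Lemma 5.5, invertibility of the Newton Jacobian at the eigenvalue:
let `T : V → V*` be continuous linear and self-adjoint (`⟨T v₁, v₂⟩ = conj ⟨T v₂, v₁⟩`),
`u⋆ ≠ 0` with `ker T = span{u⋆}`, `w ∈ V*` with `⟨w, u⋆⟩ ≠ 0` and
`{h : ⟨h, u⋆⟩ = 0} ⊆ range T`, and `P` a continuous linear functional with `P u⋆ ≠ 0`.
Then the block map `(s, ν) ↦ (T s + ν w, P s)` is bijective; in particular the unique
solution of `T s + ν w = f`, `P s = g` has `ν = ⟨f, u⋆⟩ / ⟨w, u⋆⟩`. -/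
theorem stmt_12 {V : Type*}
    [NormedAddCommGroup V] [InnerProductSpace ℂ V] [CompleteSpace V]
    (T : V →L[ℂ] (V →L[ℂ] ℂ))
    (hsa : ∀ v₁ v₂ : V, T v₁ v₂ = (starRingEnd ℂ) (T v₂ v₁))
    (ustar : V) (hustar : ustar ≠ 0)
    (hker : ∀ v : V, T v = 0 ↔ ∃ c : ℂ, v = c • ustar)
    (w : V →L[ℂ] ℂ) (hw : w ustar ≠ 0)
    (hrange : ∀ h : V →L[ℂ] ℂ, h ustar = 0 → ∃ v : V, T v = h)
    (P : V →L[ℂ] ℂ) (hP : P ustar ≠ 0) :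
    ∀ (f : V →L[ℂ] ℂ) (g : ℂ),
      (∃! p : V × ℂ, T p.1 + p.2 • w = f ∧ P p.1 = g) ∧
        ∀ (s : V) (ν : ℂ), T s + ν • w = f → P s = g → ν = f ustar / w ustar := by
  intro f g
  have hTu : T ustar = 0 := (hker ustar).mpr ⟨1, (one_smul ℂ ustar).symm⟩
  have hTs : ∀ s : V, T s ustar = 0 := by
    intro s
    rw [hsa s ustar, hTu]
    simp
  -- the ν formula
  have hnu : ∀ (s : V) (ν : ℂ), T s + ν • w = f → ν = f ustar / w ustar := by
    intro s ν h
    have h1 : T s ustar + ν * w ustar = f ustar := by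
      have := congrArg (fun φ : V →L[ℂ] ℂ => φ ustar) h
      simpa using this
    rw [hTs s, zero_add] at h1
    field_simp [h1]
    exact h1
  constructor
  · -- existence
    set ν := f ustar / w ustar with hν
    have hh : (f - ν • w) ustar = 0 := by
      simp only [ContinuousLinearMap.sub_apply, ContinuousLinearMap.smul_apply, smul_eq_mul, hν]
      field_simp
      ring
    obtain ⟨v, hv⟩ := hrange (f - ν • w) hh
    set c := (g - P v) / P ustar with hc
    refine ⟨⟨v + c • ustar, ν⟩, ⟨?_, ?_⟩, ?_⟩
    · simp only [map_add, map_smul, hTu, smul_zero, add_zero, hv]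
      module
    · simp only [map_add, map_smul, smul_eq_mul, hc]
      field_simp
      ring
    · rintro ⟨s, μ⟩ ⟨h1, h2⟩
      have hμ : μ = ν := hnu s μ h1
      subst hμ
      have hT0 : T (s - (v + c • ustar)) = 0 := by
        have hTv : T (v + c • ustar) + ν • w = f := by
          simp only [map_add, map_smul, hTu, smul_zero, add_zero, hv]
          module
        have := h1.trans hTv.symm
        have h3 : T s = T (v + c • ustar) := by
          have := congrArg (fun φ => φ - ν • w) this
          simpa using this
        rw [map_sub, h3, sub_self]
      obtain ⟨d, hd⟩ := (hker _).mp hT0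
      have hPv : P (v + c • ustar) = g := by
        simp only [map_add, map_smul, smul_eq_mul, hc]; field_simp; ring
      have hPd : P (s - (v + c • ustar)) = 0 := by
        rw [map_sub, h2, hPv, sub_self]
      rw [hd, map_smul, smul_eq_mul] at hPd
      have hd0 : d = 0 := by
        rcases mul_eq_zero.mp hPd with h | h
        · exact h
        · exact absurd h hP
      have : s - (v + c • ustar) = 0 := by rw [hd, hd0, zero_smul]
      have hs : s = v + c • ustar := by
        have := sub_eq_zero.mp this
        exact this
      exact Prod.ext hs rfl
  · intro s ν h _
    exact hnu s ν h
end

section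
/- (Newton–Kantorovich.) Let X and Y be real Banach spaces, let D ⊆ X be open and convex, and let F : X → Y be Fréchet differentiable at every point of D with derivative F'(z). Let z₀ ∈ D and suppose F'(z₀) is invertible with continuous inverse F'(z₀)⁻¹. Assume there are constants α ≥ 0 and κ₀ > 0 such that ‖F'(z₀)⁻¹ F(z₀)‖ ≤ α, and ‖F'(z₀)⁻¹ ∘ (F'(z) − F'(z̃))‖_{op} ≤ κ₀·‖z − z̃‖ for all z, z̃ ∈ D. Set h₀ := α·κ₀ and assume h₀ ≤ 1/2 and that the closed ball of radius ρ := (1 − √(1 − 2h₀))/κ₀ around z₀ is contained in D. Then there exists a sequence z : ℕ → X with z(0) = z₀ such that for every j, F'(z(j)) is invertible and z(j+1) = z(j) − F'(z(j))⁻¹ F(z(j)), every z(j) lies in the closed ball of radius ρ around z₀, and z(j) converges to some z⋆ in that ball with F(z⋆) = 0. -/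
open Filter Metric Set

section Helpers
variable {X Y : Type*} [NormedAddCommGroup X] [NormedSpace ℝ X]
  [NormedAddCommGroup Y] [NormedSpace ℝ Y]

lemma nk_symm_congr (e e' : X ≃L[ℝ] Y)
    (h : (e : X →L[ℝ] Y) = (e' : X →L[ℝ] Y)) (y : Y) : e.symm y = e'.symm y := by
  have happ : e (e.symm y) = e' (e.symm y) := by
    rw [← ContinuousLinearEquiv.coe_coe, h, ContinuousLinearEquiv.coe_coe]
  rw [ContinuousLinearEquiv.apply_symm_apply] at happ
  exact ((e'.symm_apply_eq).mpr happ).symm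

lemma nk_neumann [CompleteSpace X] (T : X →L[ℝ] X) (hT : ‖T‖ < 1) :
    ∃ u : X ≃L[ℝ] X, (u : X →L[ℝ] X) = 1 + T ∧
      ∀ y, (1 - ‖T‖) * ‖u.symm y‖ ≤ ‖y‖ := by
  have h' : ‖-T‖ < 1 := by simpa using hT
  refine ⟨ContinuousLinearEquiv.ofUnit (Units.oneSub (-T) h'), ?_, ?_⟩
  · ext x
    show ((1:X →L[ℝ] X) - -T) x = ((1:X →L[ℝ] X) + T) x
    rw [sub_neg_eq_add]
  · intro y
    set u := ContinuousLinearEquiv.ofUnit (Units.oneSub (-T) h') with hu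
    set x := u.symm y with hx
    have hux : x + T x = y := by
      have h1 : u x = y := u.apply_symm_apply y
      have h2 : u x = x + T x := by
        show (Units.oneSub (-T) h').val x = x + T x
        simp [Units.oneSub, sub_neg_eq_add]
      rw [← h2, h1]
    have h3 : ‖x‖ ≤ ‖y‖ + ‖T‖ * ‖x‖ := by
      have : x = y - T x := by rw [← hux]; abel
      calc ‖x‖ = ‖y - T x‖ := by rw [← this]
        _ ≤ ‖y‖ + ‖T x‖ := norm_sub_le _ _
        _ ≤ ‖y‖ + ‖T‖ * ‖x‖ := by gcongr; exact T.le_opNorm x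
    nlinarith [norm_nonneg x]

lemma nk_invert [CompleteSpace X] (e₀ : X ≃L[ℝ] Y) (B : X →L[ℝ] Y) (c : ℝ)
    (hc : ‖(e₀.symm : Y →L[ℝ] X).comp (B - (e₀ : X →L[ℝ] Y))‖ ≤ c) (hc1 : c < 1) :
    ∃ e : X ≃L[ℝ] Y, (e : X →L[ℝ] Y) = B ∧
      ∀ y, (1 - c) * ‖e.symm y‖ ≤ ‖e₀.symm y‖ := by
  set T := (e₀.symm : Y →L[ℝ] X).comp (B - (e₀ : X →L[ℝ] Y)) with hT
  obtain ⟨u, hucoe, hubound⟩ := nk_neumann T (lt_of_le_of_lt hc hc1)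
  refine ⟨u.trans e₀, ?_, ?_⟩
  · ext x
    have h1 : u x = x + T x := by
      have : (u : X →L[ℝ] X) x = (1 + T) x := by rw [hucoe]
      simpa using this
    simp only [ContinuousLinearEquiv.coe_coe, ContinuousLinearEquiv.trans_apply, h1]
    simp [hT, map_add, ContinuousLinearMap.comp_apply, ContinuousLinearMap.sub_apply,
      ContinuousLinearEquiv.coe_coe]
  · intro y
    have hsy : (u.trans e₀).symm y = u.symm (e₀.symm y) := by
      simp [ContinuousLinearEquiv.symm_trans_apply]
    rw [hsy]
    have h2 := hubound (e₀.symm y)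
    have hTle : 1 - c ≤ 1 - ‖T‖ := by linarith [hc]
    calc (1 - c) * ‖u.symm (e₀.symm y)‖ ≤ (1 - ‖T‖) * ‖u.symm (e₀.symm y)‖ := mul_le_mul_of_nonneg_right hTle (norm_nonneg _)
      _ ≤ ‖e₀.symm y‖ := h2

end Helpers

lemma nk_taylor {X Y : Type*} [NormedAddCommGroup X] [NormedSpace ℝ X] [CompleteSpace X]
    [NormedAddCommGroup Y] [NormedSpace ℝ Y]
    (D : Set X) (F : X → Y) (F' : X → (X →L[ℝ] Y))
    (hF : ∀ z ∈ D, HasFDerivAt F (F' z) z)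
    (A : Y →L[ℝ] X) (κ₀ : ℝ) (hκ : 0 ≤ κ₀)
    (hLip : ∀ z ∈ D, ∀ z' ∈ D, ‖A.comp (F' z - F' z')‖ ≤ κ₀ * ‖z - z'‖)
    (z w : X) (hseg : segment ℝ z w ⊆ D) :
    ‖A (F w - F z - (F' z) (w - z))‖ ≤ κ₀ / 2 * ‖w - z‖ ^ 2 := by
  set γ : ℝ → X := fun t => z + t • (w - z) with hγ
  have hγmem : ∀ t ∈ Set.Icc (0:ℝ) 1, γ t ∈ D := by
    intro t ht
    apply hseg
    rw [segment_eq_image']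
    exact ⟨t, ht, rfl⟩
  set φ : ℝ → X := fun t => A (F (γ t)) - t • (A ((F' z) (w - z))) with hφ
  set ψ : ℝ → X := fun t => A ((F' (γ t)) (w - z)) - A ((F' z) (w - z)) with hψ
  have hψ' : ∀ t, ψ t = (A.comp (F' (γ t) - F' z)) (w - z) := by
    intro t; simp [hψ]
  have hγsub : ∀ s t : ℝ, γ s - γ t = (s - t) • (w - z) := by
    intro s t; simp [hγ, sub_smul]
  have hderiv : ∀ t ∈ Set.Icc (0:ℝ) 1, HasDerivAt φ (ψ t) t := by
    intro t ht
    have h1 : HasDerivAt γ (w - z) t := by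
      have := ((hasDerivAt_id t).smul_const (w - z)).const_add z
      simpa [hγ] using this
    have h2 : HasDerivAt (fun t => F (γ t)) ((F' (γ t)) (w - z)) t :=
      (hF (γ t) (hγmem t ht)).comp_hasDerivAt t h1
    have h3 : HasDerivAt (fun t => A (F (γ t))) (A ((F' (γ t)) (w - z))) t :=
      A.hasFDerivAt.comp_hasDerivAt t h2
    have h4 : HasDerivAt (fun t : ℝ => t • (A ((F' z) (w - z)))) (A ((F' z) (w - z))) t := by
      simpa using (hasDerivAt_id t).smul_const (A ((F' z) (w - z)))
    exact h3.sub h4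
  have hψcont : ContinuousOn ψ (Set.Icc (0:ℝ) 1) := by
    have hlip : LipschitzOnWith (Real.toNNReal (κ₀ * ‖w - z‖ ^ 2)) ψ (Set.Icc 0 1) := by
      rw [lipschitzOnWith_iff_dist_le_mul]
      intro s hs u hu
      rw [dist_eq_norm, dist_eq_norm]
      have hdiff : ψ s - ψ u = (A.comp (F' (γ s) - F' (γ u))) (w - z) := by
        simp [hψ, ContinuousLinearMap.comp_apply, ContinuousLinearMap.sub_apply, map_sub]
        abel
      rw [hdiff]
      calc ‖(A.comp (F' (γ s) - F' (γ u))) (w - z)‖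
          ≤ ‖A.comp (F' (γ s) - F' (γ u))‖ * ‖w - z‖ :=
            ContinuousLinearMap.le_opNorm _ _
        _ ≤ (κ₀ * ‖γ s - γ u‖) * ‖w - z‖ := by
            apply mul_le_mul_of_nonneg_right _ (norm_nonneg _)
            exact hLip _ (hγmem s hs) _ (hγmem u hu)
        _ = (κ₀ * ‖w - z‖ ^ 2) * ‖s - u‖ := by
            rw [hγsub, norm_smul]; ring
        _ = ↑(Real.toNNReal (κ₀ * ‖w - z‖ ^ 2)) * ‖s - u‖ := by
            rw [Real.coe_toNNReal _ (by positivity)]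
    exact hlip.continuousOn
  have huicc : Set.uIcc (0:ℝ) 1 = Set.Icc 0 1 := Set.uIcc_of_le zero_le_one
  have hint : IntervalIntegrable ψ MeasureTheory.volume 0 1 := by
    apply ContinuousOn.intervalIntegrable
    rwa [huicc]
  have hFTC : ∫ t in (0:ℝ)..1, ψ t = φ 1 - φ 0 :=
    intervalIntegral.integral_eq_sub_of_hasDerivAt
      (fun t ht => hderiv t (huicc ▸ ht)) hint
  have hφdiff : φ 1 - φ 0 = A (F w - F z - (F' z) (w - z)) := by
    have hγ1 : γ 1 = w := by simp [hγ]
    have hγ0 : γ 0 = z := by simp [hγ]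
    simp [hφ, hγ1, hγ0, map_sub]
    abel
  have hψbound : ∀ t ∈ Set.Ioc (0:ℝ) 1, ‖ψ t‖ ≤ (κ₀ * ‖w - z‖ ^ 2) * t := by
    intro t ht
    rw [hψ' t]
    calc ‖(A.comp (F' (γ t) - F' z)) (w - z)‖
        ≤ ‖A.comp (F' (γ t) - F' z)‖ * ‖w - z‖ := ContinuousLinearMap.le_opNorm _ _
      _ ≤ (κ₀ * ‖γ t - z‖) * ‖w - z‖ := by
          apply mul_le_mul_of_nonneg_right _ (norm_nonneg _)
          exact hLip _ (hγmem t ⟨ht.1.le, ht.2⟩) _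
            (by simpa [hγ] using hγmem 0 ⟨le_refl _, zero_le_one⟩)
      _ = (κ₀ * ‖w - z‖ ^ 2) * t := by
          have : γ t - z = t • (w - z) := by simp [hγ]
          rw [this, norm_smul, Real.norm_eq_abs, abs_of_nonneg ht.1.le]; ring
  have hgint : IntervalIntegrable (fun t => (κ₀ * ‖w - z‖ ^ 2) * t) MeasureTheory.volume 0 1 :=
    (continuous_const.mul continuous_id).intervalIntegrable 0 1
  have hval : ∫ t in (0:ℝ)..1, (κ₀ * ‖w - z‖ ^ 2) * t = κ₀ / 2 * ‖w - z‖ ^ 2 := by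
    rw [intervalIntegral.integral_const_mul, integral_id]
    ring
  have hle : ‖∫ t in (0:ℝ)..1, ψ t‖ ≤ ∫ t in (0:ℝ)..1, (κ₀ * ‖w - z‖ ^ 2) * t := by
    have habs : ‖∫ t in (0:ℝ)..1, ψ t‖ ≤ |∫ t in (0:ℝ)..1, (κ₀ * ‖w - z‖ ^ 2) * t| := by
      apply intervalIntegral.norm_integral_le_abs_of_norm_le _ hgint
      rw [MeasureTheory.ae_restrict_iff' measurableSet_uIoc]
      apply MeasureTheory.ae_of_all
      intro t ht
      rw [Set.uIoc_of_le zero_le_one] at ht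
      exact hψbound t ht
    rwa [hval, abs_of_nonneg (by positivity), ← hval] at habs
  calc ‖A (F w - F z - (F' z) (w - z))‖ = ‖∫ t in (0:ℝ)..1, ψ t‖ := by
        rw [hFTC, hφdiff]
    _ ≤ ∫ t in (0:ℝ)..1, (κ₀ * ‖w - z‖ ^ 2) * t := hle
    _ = κ₀ / 2 * ‖w - z‖ ^ 2 := hval


lemma nk_scalar (α κ₀ : ℝ) (hα : 0 < α) (hκ₀ : 0 < κ₀) (hh₀ : α * κ₀ ≤ 1 / 2) :
    ∃ t : ℕ → ℝ, t 0 = 0 ∧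
      (∀ j, 0 ≤ t j ∧ t j ≤ (1 - Real.sqrt (1 - 2 * (α * κ₀))) / κ₀) ∧
      (∀ j, t j ≤ t (j+1)) ∧
      (∀ j, κ₀ * t j < 1) ∧
      (∀ j, κ₀/2 * (t (j+1))^2 - t (j+1) + α = κ₀/2 * (t (j+1) - t j)^2) ∧
      (∀ j, κ₀/2 * (t j)^2 - t j + α = (t (j+1) - t j) * (1 - κ₀ * t j)) := by
  set s := Real.sqrt (1 - 2 * (α * κ₀)) with hsdef
  have hs0 : 0 ≤ s := Real.sqrt_nonneg _
  have hs2 : s ^ 2 = 1 - 2 * (α * κ₀) := Real.sq_sqrt (by linarith)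
  have hs1 : s < 1 := by nlinarith
  set ρ := (1 - s) / κ₀ with hρdef
  have hρpos : 0 < ρ := div_pos (by linarith) hκ₀
  have hκρ : κ₀ * ρ ≤ 1 := by
    rw [hρdef, mul_div_cancel₀ _ hκ₀.ne']; linarith
  have hproot : κ₀ / 2 * ρ ^ 2 - ρ + α = 0 := by
    rw [hρdef]; field_simp; nlinarith [hs2]
  obtain ⟨t, ht0, htsucc⟩ : ∃ t : ℕ → ℝ, t 0 = 0 ∧
      ∀ j, t (j+1) = t j + (κ₀/2 * (t j)^2 - t j + α)/(1 - κ₀ * t j) :=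
    ⟨fun n => Nat.rec 0 (fun _ tj => tj + (κ₀/2 * tj^2 - tj + α)/(1 - κ₀ * tj)) n,
      rfl, fun j => rfl⟩
  have hstep : ∀ j, 0 ≤ t j → t j < ρ →
      (t j ≤ t (j+1) ∧ t (j+1) < ρ) := by
    intro j h0 hlt
    have hden : 0 < 1 - κ₀ * t j := by nlinarith
    have hfac1 : 0 < 1 - κ₀ * (t j + ρ) / 2 := by nlinarith
    have hp : 0 < κ₀/2 * (t j)^2 - t j + α := by
      nlinarith [mul_pos (sub_pos.2 hlt) hfac1]
    constructor
    · rw [htsucc j]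
      have := div_pos hp hden
      linarith
    · rw [htsucc j]
      have hkey : (κ₀/2 * (t j)^2 - t j + α)/(1 - κ₀ * t j) < ρ - t j := by
        rw [div_lt_iff₀ hden]
        nlinarith [mul_pos hκ₀ (mul_pos (sub_pos.2 hlt) (sub_pos.2 hlt))]
      linarith
  have hinv : ∀ j, 0 ≤ t j ∧ t j < ρ := by
    intro j
    induction j with
    | zero => exact ⟨le_of_eq ht0.symm, by rw [ht0]; exact hρpos⟩
    | succ j ih =>
      obtain ⟨h1, h2⟩ := hstep j ih.1 ih.2
      exact ⟨le_trans ih.1 h1, h2⟩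
  have hlt1 : ∀ j, κ₀ * t j < 1 := by
    intro j
    calc κ₀ * t j < κ₀ * ρ := by
          exact mul_lt_mul_of_pos_left (hinv j).2 hκ₀
      _ ≤ 1 := hκρ
  refine ⟨t, ht0, fun j => ⟨(hinv j).1, (hinv j).2.le⟩,
    fun j => (hstep j (hinv j).1 (hinv j).2).1, hlt1, ?_, ?_⟩
  · intro j
    have hden : (1 - κ₀ * t j) ≠ 0 := by linarith [hlt1 j]
    rw [htsucc j]
    field_simp
    ring
  · intro j
    have hden : (1 - κ₀ * t j) ≠ 0 := by linarith [hlt1 j]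
    rw [htsucc j]
    field_simp
    ring

/-- Theorem 5.3, Newton–Kantorovich: let `X`, `Y` be real Banach spaces,
`D ⊆ X` open and convex, `F : X → Y` Fréchet differentiable on `D` with derivative `F'`,
`z₀ ∈ D` with `F'(z₀)` invertible with continuous inverse (given by the continuous linear
equivalence `e₀`).  Assume `‖F'(z₀)⁻¹ F(z₀)‖ ≤ α`,
`‖F'(z₀)⁻¹ ∘ (F'(z) − F'(z̃))‖ ≤ κ₀ ‖z − z̃‖` on `D`, `h₀ := α κ₀ ≤ 1/2`, and that the
closed ball of radius `ρ = (1 − √(1 − 2h₀))/κ₀` around `z₀` lies in `D`.  Then the Newton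
iterates starting at `z₀` are well defined, remain in that ball, and converge to a zero of
`F` in the ball. -/
theorem stmt_14 {X Y : Type*}
    [NormedAddCommGroup X] [NormedSpace ℝ X] [CompleteSpace X]
    [NormedAddCommGroup Y] [NormedSpace ℝ Y] [CompleteSpace Y]
    (D : Set X) (hDopen : IsOpen D) (hDconv : Convex ℝ D)
    (F : X → Y) (F' : X → (X →L[ℝ] Y))
    (hF : ∀ z ∈ D, HasFDerivAt F (F' z) z)
    (z₀ : X) (hz₀ : z₀ ∈ D)
    (e₀ : X ≃L[ℝ] Y) (he₀ : (e₀ : X →L[ℝ] Y) = F' z₀)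
    (α κ₀ : ℝ) (hα : 0 ≤ α) (hκ₀ : 0 < κ₀)
    (hbound : ‖e₀.symm (F z₀)‖ ≤ α)
    (hLip : ∀ z ∈ D, ∀ z' ∈ D,
      ‖(e₀.symm : Y →L[ℝ] X).comp (F' z - F' z')‖ ≤ κ₀ * ‖z - z'‖)
    (hh₀ : α * κ₀ ≤ 1 / 2)
    (hball : Metric.closedBall z₀ ((1 - Real.sqrt (1 - 2 * (α * κ₀))) / κ₀) ⊆ D) :
    ∃ z : ℕ → X, z 0 = z₀ ∧
      (∀ j, ∃ e : X ≃L[ℝ] Y, (e : X →L[ℝ] Y) = F' (z j) ∧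
        z (j + 1) = z j - e.symm (F (z j))) ∧
      (∀ j, z j ∈ Metric.closedBall z₀ ((1 - Real.sqrt (1 - 2 * (α * κ₀))) / κ₀)) ∧
      ∃ zstar ∈ Metric.closedBall z₀ ((1 - Real.sqrt (1 - 2 * (α * κ₀))) / κ₀),
        Filter.Tendsto z Filter.atTop (nhds zstar) ∧ F zstar = 0 := by
  classical
  have hrad : 0 ≤ (1 - Real.sqrt (1 - 2 * (α * κ₀))) / κ₀ := by
    have h1 : Real.sqrt (1 - 2 * (α * κ₀)) ≤ Real.sqrt 1 := Real.sqrt_le_sqrt (by nlinarith)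
    rw [Real.sqrt_one] at h1
    exact div_nonneg (by linarith) hκ₀.le
  rcases eq_or_lt_of_le hα with hα0 | hαpos
  · -- α = 0 : F z₀ = 0 and the constant sequence works
    have hF0 : F z₀ = 0 := by
      have h1 : ‖e₀.symm (F z₀)‖ ≤ 0 := by rw [hα0]; exact hbound
      have h2 : e₀.symm (F z₀) = 0 := by
        have := le_antisymm h1 (norm_nonneg _)
        exact norm_eq_zero.mp this
      have := congrArg e₀ h2
      simpa using this
    refine ⟨fun _ => z₀, rfl, ?_, ?_, ⟨z₀, ?_, tendsto_const_nhds, hF0⟩⟩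
    · intro j
      exact ⟨e₀, he₀, by rw [hF0]; simp⟩
    · intro j
      exact Metric.mem_closedBall_self hrad
    · exact Metric.mem_closedBall_self hrad
  · -- α > 0 : the real work
    obtain ⟨t, ht0, hinv, hmono, hlt1, hpstep, hb3all⟩ := nk_scalar α κ₀ hαpos hκ₀ hh₀
    set ρ := (1 - Real.sqrt (1 - 2 * (α * κ₀))) / κ₀ with hρdef
    -- the Newton iterates
    set step : X → X := fun x =>
      if h : ∃ e : X ≃L[ℝ] Y, (e : X →L[ℝ] Y) = F' x then x - h.choose.symm (F x) else x
      with hstepdef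
    obtain ⟨z, hz0, hzsucc⟩ : ∃ z : ℕ → X, z 0 = z₀ ∧ ∀ j, z (j+1) = step (z j) :=
      ⟨fun n => Nat.rec z₀ (fun _ x => step x) n, rfl, fun j => rfl⟩
    -- the key construction step
    have build : ∀ j, ‖z j - z₀‖ ≤ t j →
        ‖e₀.symm (F (z j))‖ ≤ κ₀/2 * (t j)^2 - t j + α →
        ((∃ e : X ≃L[ℝ] Y, (e : X →L[ℝ] Y) = F' (z j) ∧
          z (j + 1) = z j - e.symm (F (z j))) ∧
         ‖z (j+1) - z j‖ ≤ t (j+1) - t j) := by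
      intro j h1 h2
      have hmem : z j ∈ Metric.closedBall z₀ ρ := by
        rw [Metric.mem_closedBall, dist_eq_norm]
        exact h1.trans (hinv j).2
      have hD : z j ∈ D := hball hmem
      have hc : ‖(e₀.symm : Y →L[ℝ] X).comp (F' (z j) - (e₀ : X →L[ℝ] Y))‖ ≤ κ₀ * t j := by
        rw [he₀]
        exact (hLip _ hD _ hz₀).trans (mul_le_mul_of_nonneg_left h1 hκ₀.le)
      have hc1 : κ₀ * t j < 1 := hlt1 j
      obtain ⟨e, hecoe, hebound⟩ := nk_invert e₀ (F' (z j)) (κ₀ * t j) hc hc1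
      have hex : ∃ e' : X ≃L[ℝ] Y, (e' : X →L[ℝ] Y) = F' (z j) := ⟨e, hecoe⟩
      have hz1 : z (j+1) = z j - e.symm (F (z j)) := by
        rw [hzsucc j, hstepdef]
        simp only
        rw [dif_pos hex]
        rw [nk_symm_congr hex.choose e (hex.choose_spec.trans hecoe.symm) (F (z j))]
      refine ⟨⟨e, hecoe, hz1⟩, ?_⟩
      have hden : 0 < 1 - κ₀ * t j := by linarith [hlt1 j]
      have hb1 : (1 - κ₀ * t j) * ‖e.symm (F (z j))‖ ≤ ‖e₀.symm (F (z j))‖ := hebound _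
      have hb3 : κ₀/2 * (t j)^2 - t j + α = (t (j+1) - t j) * (1 - κ₀ * t j) := hb3all j
      have hb4 : (1 - κ₀ * t j) * ‖e.symm (F (z j))‖ ≤ (1 - κ₀ * t j) * (t (j+1) - t j) := by
        have := hb1.trans (h2.trans_eq hb3)
        linarith [this]
      have hb5 : ‖e.symm (F (z j))‖ ≤ t (j+1) - t j :=
        (mul_le_mul_iff_right₀ hden).mp hb4
      have : z (j+1) - z j = -(e.symm (F (z j))) := by rw [hz1]; abel
      rw [this, norm_neg]
      exact hb5
    -- the invariant
    have main : ∀ j, ‖z j - z₀‖ ≤ t j ∧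
        ‖e₀.symm (F (z j))‖ ≤ κ₀/2 * (t j)^2 - t j + α := by
      intro j
      induction j with
      | zero =>
        constructor
        · rw [hz0, ht0]; simp
        · rw [hz0, ht0]
          simpa using hbound
      | succ j ih =>
        obtain ⟨h1, h2⟩ := ih
        obtain ⟨⟨e, hecoe, hz1⟩, hstepb⟩ := build j h1 h2
        have htri : ‖z (j+1) - z₀‖ ≤ t (j+1) := by
          calc ‖z (j+1) - z₀‖ ≤ ‖z (j+1) - z j‖ + ‖z j - z₀‖ := norm_sub_le_norm_sub_add_norm_sub _ _ _
            _ ≤ (t (j+1) - t j) + t j := add_le_add hstepb h1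
            _ = t (j+1) := by ring
        refine ⟨htri, ?_⟩
        have hmemj : z j ∈ Metric.closedBall z₀ ρ := by
          rw [Metric.mem_closedBall, dist_eq_norm]; exact h1.trans (hinv j).2
        have hmemj1 : z (j+1) ∈ Metric.closedBall z₀ ρ := by
          rw [Metric.mem_closedBall, dist_eq_norm]; exact htri.trans (hinv (j+1)).2
        have hseg : segment ℝ (z j) (z (j+1)) ⊆ D :=
          subset_trans ((convex_closedBall z₀ ρ).segment_subset hmemj hmemj1) hball
        have htay := nk_taylor D F F' hF (e₀.symm : Y →L[ℝ] X) κ₀ hκ₀.le hLip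
          (z j) (z (j+1)) hseg
        have harg : F (z (j+1)) - F (z j) - (F' (z j)) (z (j+1) - z j) = F (z (j+1)) := by
          have h5 : (F' (z j)) (z (j+1) - z j) = -(F (z j)) := by
            rw [← hecoe, hz1]
            simp
          rw [h5]
          abel
        rw [harg] at htay
        have hnorm2 : κ₀ / 2 * ‖z (j+1) - z j‖ ^ 2 ≤ κ₀/2 * (t (j+1) - t j)^2 := by
          have h6 : 0 ≤ t (j+1) - t j := by linarith [hmono j]
          have h7 : (0:ℝ) ≤ κ₀ / 2 := by linarith
          apply mul_le_mul_of_nonneg_left _ h7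
          exact pow_le_pow_left₀ (norm_nonneg _) hstepb 2
        rw [hpstep j]
        calc ‖e₀.symm (F (z (j+1)))‖ = ‖(e₀.symm : Y →L[ℝ] X) (F (z (j+1)))‖ := by simp
          _ ≤ κ₀ / 2 * ‖z (j+1) - z j‖ ^ 2 := htay
          _ ≤ κ₀/2 * (t (j+1) - t j)^2 := hnorm2
    -- membership of iterates
    have hmem : ∀ j, z j ∈ Metric.closedBall z₀ ρ := by
      intro j
      rw [Metric.mem_closedBall, dist_eq_norm]
      exact (main j).1.trans (hinv j).2
    -- convergence of the majorant sequence
    have hmonot : Monotone t := monotone_nat_of_le_succ hmono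
    have hbdd : BddAbove (Set.range t) := ⟨ρ, by rintro x ⟨j, rfl⟩; exact (hinv j).2⟩
    have hL : Filter.Tendsto t Filter.atTop (nhds (⨆ i, t i)) :=
      tendsto_atTop_ciSup hmonot hbdd
    -- the iterates form a Cauchy sequence
    have hsummable : Summable (fun j => t (j+1) - t j) := by
      apply summable_of_sum_range_le (c := ρ) (fun n => by linarith [hmono n])
      intro n
      rw [Finset.sum_range_sub (f := t)]
      linarith [(hinv n).2, (hinv 0).1, ht0]
    have hcauchy : CauchySeq z := by
      apply cauchySeq_of_dist_le_of_summable (fun j => t (j+1) - t j) _ hsummable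
      intro n
      rw [dist_eq_norm, norm_sub_rev]
      exact (build n (main n).1 (main n).2).2
    obtain ⟨zstar, hzs⟩ := cauchySeq_tendsto_of_complete hcauchy
    have hzsmem : zstar ∈ Metric.closedBall z₀ ρ :=
      Metric.isClosed_closedBall.mem_of_tendsto hzs (Filter.Eventually.of_forall hmem)
    -- F zstar = 0
    have hd0 : Filter.Tendsto (fun j => t (j+1) - t j) Filter.atTop (nhds 0) := by
      have h8 : Filter.Tendsto (fun j => t (j+1)) Filter.atTop (nhds (⨆ i, t i)) :=
        hL.comp (Filter.tendsto_add_atTop_nat 1)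
      have := h8.sub hL
      simpa using this
    have hp1 : Filter.Tendsto (fun j => κ₀/2 * (t (j+1))^2 - t (j+1) + α)
        Filter.atTop (nhds 0) := by
      have h9 : Filter.Tendsto (fun j => κ₀/2 * (t (j+1) - t j)^2) Filter.atTop (nhds 0) := by
        have := (hd0.mul hd0).const_mul (κ₀/2)
        simpa [pow_two] using this
      apply h9.congr
      intro j
      rw [hpstep j]
    have hp0 : Filter.Tendsto (fun j => κ₀/2 * (t j)^2 - t j + α) Filter.atTop (nhds 0) :=
      (Filter.tendsto_add_atTop_iff_nat 1).mp hp1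
    have hFz0 : Filter.Tendsto (fun j => e₀.symm (F (z j))) Filter.atTop (nhds 0) := by
      rw [tendsto_zero_iff_norm_tendsto_zero]
      apply squeeze_zero (fun j => norm_nonneg _) (fun j => (main j).2) hp0
    have hFcont : Filter.Tendsto (fun j => e₀.symm (F (z j))) Filter.atTop
        (nhds (e₀.symm (F zstar))) := by
      have hc1 : ContinuousAt F zstar := (hF zstar (hball hzsmem)).continuousAt
      exact ((e₀.symm.continuous.tendsto _).comp (hc1.tendsto.comp hzs))
    have hsymm0 : e₀.symm (F zstar) = 0 := tendsto_nhds_unique hFcont hFz0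
    have hFzstar : F zstar = 0 := by
      have := congrArg e₀ hsymm0
      simpa using this
    exact ⟨z, hz0, fun j => (build j (main j).1 (main j).2).1, hmem,
      zstar, hzsmem, hzs, hFzstar⟩
end

section
/- Let V and X be complex Hilbert spaces with V* the topological dual of V, let R : V → X, 𝒜 : V → V*, and ℐ_α : V → V* be continuous linear maps, let L ∈ ℕ, ξ, η : Fin L → ℝ, and set Ξ := Σ_ℓ ξ_ℓ². Define I₂ : V → V* by ⟨I₂ u, v⟩ := (R u, R v)_X and, for p ∈ X, define Ī₂ p ∈ V* by ⟨Ī₂ p, v⟩ := (p, R v)_X. Let λ ∈ ℂ satisfy λ ≠ η_ℓ² for all ℓ, and let u ∈ V. Then the following are equivalent: (i) 𝒜 u + Ξ·I₂ u = λ·ℐ_α u + ( Σ_ℓ ξ_ℓ² η_ℓ² / (η_ℓ² − λ) )·I₂ u in V* (the nonlinear eigenvalue problem); (ii) there exists x : Fin L → X such that 𝒜 u + Ξ·I₂ u − Ī₂( Σ_ℓ (ξ_ℓ η_ℓ)·x_ℓ ) = λ·ℐ_α u in V* and η_ℓ²·x_ℓ − (ξ_ℓ η_ℓ)·R u = λ·x_ℓ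 in X for every ℓ (the linearized eigenvalue problem). Moreover, in (ii) the auxiliary variable is uniquely determined as x_ℓ = (ξ_ℓ η_ℓ / (η_ℓ² − λ))·R u. -/
/-- Lemma 4.5, equivalence of the nonlinear and the linearized eigenvalue
problems: `V`, `X` complex Hilbert spaces, `R : V → X`, `𝒜, ℐ_α : V → V*` continuous
linear, `Ξ = Σ ξ_ℓ²`, and `λ ≠ η_ℓ²` for all `ℓ`.  The pairings are written against test
functions `v ∈ V`: `⟨I₂ u, v⟩ = (R u, R v)_X` and `⟨Ī₂ p, v⟩ = (p, R v)_X`, where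
`(p, q)_X` (linear in the first argument) is `inner ℂ (R v) p` in Mathlib's convention.
Then the nonlinear eigenvalue problem (i) is equivalent to the linearized problem (ii),
and in (ii) the auxiliary variable is uniquely `x_ℓ = (ξ_ℓ η_ℓ/(η_ℓ² − λ)) R u`. -/
theorem stmt_15 {V X : Type*}
    [NormedAddCommGroup V] [InnerProductSpace ℂ V] [CompleteSpace V]
    [NormedAddCommGroup X] [InnerProductSpace ℂ X] [CompleteSpace X]
    (R : V →L[ℂ] X) (A Iα : V →L[ℂ] (V →L[ℂ] ℂ))
    (L : ℕ) (ξ η : Fin L → ℝ)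
    (lam : ℂ) (hlam : ∀ ℓ, lam ≠ ((η ℓ : ℂ)) ^ 2) (u : V) :
    ((∀ v : V,
        A u v + ((∑ ℓ, (ξ ℓ) ^ 2 : ℝ) : ℂ) * (inner ℂ (R v) (R u) : ℂ) =
          lam * Iα u v +
            (∑ ℓ, ((ξ ℓ : ℂ)) ^ 2 * ((η ℓ : ℂ)) ^ 2 / (((η ℓ : ℂ)) ^ 2 - lam)) *
              (inner ℂ (R v) (R u) : ℂ)) ↔
      (∃ x : Fin L → X,
        (∀ v : V,
          A u v + ((∑ ℓ, (ξ ℓ) ^ 2 : ℝ) : ℂ) * (inner ℂ (R v) (R u) : ℂ) -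
              (inner ℂ (R v) (∑ ℓ, ((ξ ℓ * η ℓ : ℝ) : ℂ) • x ℓ) : ℂ) =
            lam * Iα u v) ∧
        (∀ ℓ, ((η ℓ : ℂ)) ^ 2 • x ℓ - ((ξ ℓ * η ℓ : ℝ) : ℂ) • R u = lam • x ℓ))) ∧
      (∀ x : Fin L → X,
        ((∀ v : V,
          A u v + ((∑ ℓ, (ξ ℓ) ^ 2 : ℝ) : ℂ) * (inner ℂ (R v) (R u) : ℂ) -
              (inner ℂ (R v) (∑ ℓ, ((ξ ℓ * η ℓ : ℝ) : ℂ) • x ℓ) : ℂ) =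
            lam * Iα u v) ∧
          (∀ ℓ, ((η ℓ : ℂ)) ^ 2 • x ℓ - ((ξ ℓ * η ℓ : ℝ) : ℂ) • R u = lam • x ℓ)) →
        ∀ ℓ, x ℓ = (((ξ ℓ * η ℓ : ℝ) : ℂ) / (((η ℓ : ℂ)) ^ 2 - lam)) • R u) := by
  have hne : ∀ ℓ, ((η ℓ : ℂ)) ^ 2 - lam ≠ 0 := fun ℓ =>
    sub_ne_zero.mpr fun h => hlam ℓ h.symm
  set d : Fin L → ℂ := fun ℓ => ((ξ ℓ * η ℓ : ℝ) : ℂ) / (((η ℓ : ℂ)) ^ 2 - lam) with hd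
  have uniq : ∀ x : Fin L → X,
      ((∀ v : V,
          A u v + ((∑ ℓ, (ξ ℓ) ^ 2 : ℝ) : ℂ) * (inner ℂ (R v) (R u) : ℂ) -
              (inner ℂ (R v) (∑ ℓ, ((ξ ℓ * η ℓ : ℝ) : ℂ) • x ℓ) : ℂ) =
            lam * Iα u v) ∧
          (∀ ℓ, ((η ℓ : ℂ)) ^ 2 • x ℓ - ((ξ ℓ * η ℓ : ℝ) : ℂ) • R u = lam • x ℓ)) →
        ∀ ℓ, x ℓ = d ℓ • R u := by
    intro x hx ℓ
    have h := hx.2 ℓ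
    have h2 : (((η ℓ : ℂ)) ^ 2 - lam) • x ℓ = ((ξ ℓ * η ℓ : ℝ) : ℂ) • R u := by
      rw [sub_smul, sub_eq_iff_eq_add.mp h]
      abel
    have h3 := congrArg (fun y => (((η ℓ : ℂ)) ^ 2 - lam)⁻¹ • y) h2
    simpa [smul_smul, inv_mul_cancel₀ (hne ℓ), hd, div_eq_inv_mul, mul_comm] using h3
  -- the key inner-product computation
  have key : ∀ v : V,
      (inner ℂ (R v) (∑ ℓ, ((ξ ℓ * η ℓ : ℝ) : ℂ) • (d ℓ • R u)) : ℂ) =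
        (∑ ℓ, ((ξ ℓ : ℂ)) ^ 2 * ((η ℓ : ℂ)) ^ 2 / (((η ℓ : ℂ)) ^ 2 - lam)) *
          (inner ℂ (R v) (R u) : ℂ) := by
    intro v
    rw [inner_sum, Finset.sum_mul]
    refine Finset.sum_congr rfl fun ℓ _ => ?_
    rw [inner_smul_right, inner_smul_right, hd]
    push_cast
    field_simp [hne ℓ]
  have ode : ∀ ℓ, ((η ℓ : ℂ)) ^ 2 • (d ℓ • R u) - ((ξ ℓ * η ℓ : ℝ) : ℂ) • R u =
      lam • (d ℓ • R u) := by
    intro ℓ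
    rw [smul_smul, smul_smul, ← sub_smul]
    congr 1
    rw [hd]
    field_simp [hne ℓ]
    ring
  constructor
  · constructor
    · intro h
      refine ⟨fun ℓ => d ℓ • R u, fun v => ?_, ode⟩
      rw [key v, sub_eq_iff_eq_add]
      rw [h v]
    · rintro ⟨x, hx1, hx2⟩ v
      have hx := uniq x ⟨hx1, hx2⟩
      have h := hx1 v
      have hxe : (fun ℓ => x ℓ) = fun ℓ => d ℓ • R u := funext hx
      rw [show (∑ ℓ, ((ξ ℓ * η ℓ : ℝ) : ℂ) • x ℓ) =
          ∑ ℓ, ((ξ ℓ * η ℓ : ℝ) : ℂ) • (d ℓ • R u) from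
        Finset.sum_congr rfl fun ℓ _ => by rw [hx ℓ], key v] at h
      linear_combination h
  · exact uniq
end
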